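/- arXiv:2103.16655 — 2 statements merged into one kernel-verified Lean document; each statement's English description precedes it below -/
import Mathlib

section
/- Let λ > 0 and δ > 0, and let g : (0,δ) → ℝ be measurable with ∫₀^δ t^{-2λ} g(t)² dt/t < ∞. Then: (i) t ↦ g(t)/t is integrable on (0,v) for every v ∈ (0,δ), so that u(v) := ∫₀^v g(t)/t dt is well defined; (ii) ∫₀^δ v^{-2λ} u(v)² dv/v ≤ (1/λ²) · ∫₀^δ t^{-2λ} g(t)² dt/t (in particular the bound is independent of δ); (iii) u is locally absolutely continuous on (0,δ) with v·u'(v) = g(v) for almost every v; (iv) u is the unique locally absolutely continuous function w on (0,δ) satisfying v·w'(v) = g(v) almost everywhere and ∫₀^δ v^{-2λ} w(v)² dv/v < ∞. -/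
open MeasureTheory Set Filter Metric Topology

open intervalIntegral in
lemma ftc_ae (f : ℝ → ℝ) (hf : Integrable f) :
    ∀ᵐ x, HasDerivAt (fun y => ∫ t in (0:ℝ)..y, f t) (f x) x := by
  filter_upwards [IsUnifLocDoublingMeasure.ae_tendsto_average_norm_sub volume
    hf.locallyIntegrable 1] with x hx
  have hint : ∀ a b : ℝ, IntervalIntegrable f volume a b := fun a b => hf.intervalIntegrable
  rw [hasDerivAt_iff_tendsto]
  have key : Tendsto (fun y : ℝ => ⨍ t in closedBall x |y - x|, ‖f t - f x‖) (𝓝[≠] x) (𝓝 0) := by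
    apply hx (fun _ => x) (fun y => |y - x|)
    · apply tendsto_nhdsWithin_of_tendsto_nhds_of_eventually_within
      · have h0 : Tendsto (fun y : ℝ => y - x) (𝓝 x) (𝓝 (x - x)) :=
          (continuous_id.sub (continuous_const : Continuous fun _ : ℝ => x)).tendsto x
        rw [sub_self] at h0
        have : Tendsto (fun y : ℝ => y - x) (𝓝[≠] x) (𝓝 0) :=
          h0.mono_left nhdsWithin_le_nhds
        simpa using this.abs
      · filter_upwards [self_mem_nhdsWithin] with y hy
        exact abs_pos.2 (sub_ne_zero.2 hy)
    · filter_upwards with y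
      simp [abs_nonneg]
  have bound : ∀ y : ℝ, y ≠ x →
      |y - x|⁻¹ * ‖(∫ t in (0:ℝ)..y, f t) - (∫ t in (0:ℝ)..x, f t) - (y - x) • f x‖
        ≤ 2 * ⨍ t in closedBall x |y - x|, ‖f t - f x‖ := by
    intro y hy
    have hr : 0 < |y - x| := abs_pos.2 (sub_ne_zero.2 hy)
    have e1 : (∫ t in (0:ℝ)..y, f t) - (∫ t in (0:ℝ)..x, f t) = ∫ t in x..y, f t :=
      integral_interval_sub_left (hint 0 y) (hint 0 x)
    have e2 : (y - x) • f x = ∫ _ in x..y, f x := (intervalIntegral.integral_const (f x)).symm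
    have e3 : (∫ t in (0:ℝ)..y, f t) - (∫ t in (0:ℝ)..x, f t) - (y - x) • f x
        = ∫ t in x..y, (f t - f x) := by
      rw [e1, e2, integral_sub (hint x y) intervalIntegrable_const]
    rw [e3]
    have hIB : IntegrableOn (fun t => ‖f t - f x‖) (closedBall x |y - x|) :=
      (hf.integrableOn.sub (integrableOn_const
        (measure_closedBall_lt_top).ne)).norm
    have hsub : Set.uIoc x y ⊆ closedBall x |y - x| := by
      rw [Real.closedBall_eq_Icc]
      intro t ht
      rcases le_total x y with h | h
      · rw [uIoc_of_le h] at ht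
        constructor
        · have : 0 ≤ y - x := sub_nonneg.2 h
          rw [abs_of_nonneg this]; linarith [ht.1]
        · have : 0 ≤ y - x := sub_nonneg.2 h
          rw [abs_of_nonneg this]; linarith [ht.2]
      · rw [uIoc_of_ge h] at ht
        have : y - x ≤ 0 := sub_nonpos.2 h
        rw [abs_of_nonpos this]
        constructor
        · linarith [ht.1]
        · linarith [ht.2]
    have h4 : ‖∫ t in x..y, (f t - f x)‖ ≤ ∫ t in closedBall x |y - x|, ‖f t - f x‖ := by
      refine (norm_integral_le_integral_norm_uIoc).trans ?_
      exact setIntegral_mono_set hIB (Eventually.of_forall fun t => norm_nonneg _)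
        (HasSubset.Subset.eventuallyLE hsub)
    have hvol : (volume (closedBall x |y - x|)).toReal = 2 * |y - x| := by
      rw [Real.volume_closedBall]
      rw [ENNReal.toReal_ofReal (by positivity)]
    have h5 : ∫ t in closedBall x |y - x|, ‖f t - f x‖
        = (2 * |y - x|) * ⨍ t in closedBall x |y - x|, ‖f t - f x‖ := by
      rw [setAverage_eq, smul_eq_mul, measureReal_def, hvol]
      field_simp
    calc |y - x|⁻¹ * ‖∫ t in x..y, (f t - f x)‖
        ≤ |y - x|⁻¹ * ((2 * |y - x|) * ⨍ t in closedBall x |y - x|, ‖f t - f x‖) := by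
          rw [← h5]; exact mul_le_mul_of_nonneg_left h4 (by positivity)
      _ = 2 * ⨍ t in closedBall x |y - x|, ‖f t - f x‖ := by
          field_simp
  have sq : Tendsto (fun y : ℝ =>
      |y - x|⁻¹ * ‖(∫ t in (0:ℝ)..y, f t) - (∫ t in (0:ℝ)..x, f t) - (y - x) • f x‖)
      (𝓝[≠] x) (𝓝 0) := by
    have h2 : Tendsto (fun y : ℝ => 2 * ⨍ t in closedBall x |y - x|, ‖f t - f x‖)
        (𝓝[≠] x) (𝓝 0) := by simpa using key.const_mul 2
    refine squeeze_zero' ?_ ?_ h2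
    · filter_upwards with y; positivity
    · filter_upwards [self_mem_nhdsWithin] with y hy using bound y hy
  have : Tendsto (fun y : ℝ =>
      |y - x|⁻¹ * ‖(∫ t in (0:ℝ)..y, f t) - (∫ t in (0:ℝ)..x, f t) - (y - x) • f x‖)
      (𝓝 x) (𝓝 0) := by
    rw [← nhdsNE_sup_pure x]
    rw [tendsto_sup]
    refine ⟨sq, ?_⟩
    have := tendsto_pure_nhds (fun y : ℝ =>
      |y - x|⁻¹ * ‖(∫ t in (0:ℝ)..y, f t) - (∫ t in (0:ℝ)..x, f t) - (y - x) • f x‖) x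
    simpa using this
  simpa [Real.norm_eq_abs] using this

lemma integrableOn_weight_sq (lam δ : ℝ) (hδ : 0 < δ) (g : ℝ → ℝ) (hmeas : Measurable g)
    (hg : ∫⁻ t in Ioo 0 δ, ENNReal.ofReal (t ^ (-(2 * lam)) * (g t) ^ 2 / t) < ⊤) :
    IntegrableOn (fun t => t ^ (-(2 * lam)) * (g t) ^ 2 / t) (Ioo 0 δ) := by
  have hrp : Measurable fun t : ℝ => t ^ (-(2 * lam)) := by measurability
  have hFmeas : Measurable fun t : ℝ => t ^ (-(2 * lam)) * (g t) ^ 2 / t :=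
    (hrp.mul (hmeas.pow_const 2)).div measurable_id
  refine ⟨hFmeas.aestronglyMeasurable, ?_⟩
  rw [hasFiniteIntegral_iff_ofReal ?_]
  · exact hg
  · filter_upwards [ae_restrict_mem measurableSet_Ioo] with t ht
    have ht0 : (0:ℝ) < t := ht.1
    positivity

lemma integrable_div_aux (lam δ : ℝ) (hlam : 0 < lam) (hδ : 0 < δ) (g : ℝ → ℝ)
    (hmeas : Measurable g)
    (hg : ∫⁻ t in Ioo 0 δ, ENNReal.ofReal (t ^ (-(2 * lam)) * (g t) ^ 2 / t) < ⊤) :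
    ∀ v ∈ Ioo (0:ℝ) δ, IntegrableOn (fun t => g t / t) (Ioo 0 v) := by
  intro v hv
  have h1 : IntegrableOn (fun t => t ^ (-(2 * lam)) * (g t) ^ 2 / t) (Ioo 0 v) :=
    (integrableOn_weight_sq lam δ hδ g hmeas hg).mono_set
      (Ioo_subset_Ioo le_rfl hv.2.le)
  have h2 : IntegrableOn (fun t : ℝ => t ^ (2 * lam - 1)) (Ioo 0 v) := by
    have := intervalIntegral.intervalIntegrable_rpow' (show (-1:ℝ) < 2 * lam - 1 by linarith) (a := 0) (b := v)
    rwa [intervalIntegrable_iff_integrableOn_Ioo_of_le hv.1.le] at this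
  refine Integrable.mono' (h1.add h2) (hmeas.div measurable_id).aestronglyMeasurable ?_
  filter_upwards [ae_restrict_mem measurableSet_Ioo] with t ht
  have ht0 : (0:ℝ) < t := ht.1
  have hP : (0:ℝ) < t ^ (2 * lam) := Real.rpow_pos_of_pos ht0 _
  set P := t ^ (2 * lam) with hPdef
  have e1 : t ^ (-(2 * lam)) = P⁻¹ := by
    rw [hPdef, ← Real.rpow_neg ht0.le]
  have e2 : t ^ (2 * lam - 1) = P / t := by
    rw [hPdef, Real.rpow_sub ht0, Real.rpow_one]
  have key : |g t| ≤ P⁻¹ * g t ^ 2 + P := by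
    have h3 : |g t| * P ≤ g t ^ 2 + P ^ 2 := by
      nlinarith [sq_nonneg (P - |g t|), sq_abs (g t)]
    calc |g t| = |g t| * P / P := by field_simp
      _ ≤ (g t ^ 2 + P ^ 2) / P := by gcongr
      _ = P⁻¹ * g t ^ 2 + P := by field_simp
  have : ‖g t / t‖ = |g t| / t := by
    rw [Real.norm_eq_abs, abs_div, abs_of_pos ht0]
  rw [Pi.add_apply, this, e1, e2]
  calc |g t| / t ≤ (P⁻¹ * g t ^ 2 + P) / t := by gcongr
    _ = P⁻¹ * g t ^ 2 / t + P / t := by ring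

lemma lint_rpow_Ioo (lam v : ℝ) (hlam : 0 < lam) (hv : 0 < v) :
    ∫⁻ t in Ioo (0:ℝ) v, ENNReal.ofReal (t ^ (lam - 1)) = ENNReal.ofReal (v ^ lam / lam) := by
  have hint : IntegrableOn (fun t : ℝ => t ^ (lam - 1)) (Ioo 0 v) := by
    have := intervalIntegral.intervalIntegrable_rpow' (show (-1:ℝ) < lam - 1 by linarith)
      (a := 0) (b := v)
    rwa [intervalIntegrable_iff_integrableOn_Ioo_of_le hv.le] at this
  rw [← ofReal_integral_eq_lintegral_ofReal hint ?_]
  · congr 1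
    rw [← integral_Ioc_eq_integral_Ioo, ← intervalIntegral.integral_of_le hv.le,
      integral_rpow (Or.inl (by linarith))]
    rw [Real.zero_rpow (by linarith : lam - 1 + 1 ≠ 0)]
    norm_num
  · filter_upwards [ae_restrict_mem measurableSet_Ioo] with t ht
    exact Real.rpow_nonneg ht.1.le _

lemma lint_rpow_Ioo_ub (lam t δ : ℝ) (hlam : 0 < lam) (ht : 0 < t) (htδ : t < δ) :
    ∫⁻ v in Ioo t δ, ENNReal.ofReal (v ^ (-lam - 1) / lam)
      ≤ ENNReal.ofReal (t ^ (-lam) / lam ^ 2) := by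
  have hne : (0:ℝ) ∉ Set.uIcc t δ := by
    rw [uIcc_of_le htδ.le]
    intro h; exact absurd h.1 (not_le.2 ht)
  have hint : IntegrableOn (fun v : ℝ => v ^ (-lam - 1) / lam) (Ioo t δ) := by
    have := (intervalIntegral.intervalIntegrable_rpow (μ := volume)
      (r := -lam - 1) (a := t) (b := δ) (Or.inr hne)).div_const lam
    rwa [intervalIntegrable_iff_integrableOn_Ioo_of_le htδ.le] at this
  rw [← ofReal_integral_eq_lintegral_ofReal hint ?_]
  · apply ENNReal.ofReal_le_ofReal
    have : ∫ v in Ioo t δ, v ^ (-lam - 1) / lam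
        = ((δ ^ (-lam) - t ^ (-lam)) / (-lam)) / lam := by
      rw [integral_div, ← integral_Ioc_eq_integral_Ioo,
        ← intervalIntegral.integral_of_le htδ.le,
        integral_rpow (Or.inr ⟨by intro h; simp only [sub_eq_iff_eq_add] at h; linarith, hne⟩)]
      norm_num
    rw [this]
    have hδn : 0 ≤ δ ^ (-lam) := Real.rpow_nonneg (by linarith) _
    rw [div_div]
    rw [show (δ ^ (-lam) - t ^ (-lam)) / (-lam * lam)
        = (t ^ (-lam) - δ ^ (-lam)) / (lam * lam) by ring_nf]
    rw [show lam ^ 2 = lam * lam by ring]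
    gcongr
    linarith
  · filter_upwards [ae_restrict_mem measurableSet_Ioo] with v hv
    have : (0:ℝ) < v := ht.trans hv.1
    positivity

lemma hardy_pointwise (lam : ℝ) (hlam : 0 < lam) (g : ℝ → ℝ) (hmeas : Measurable g)
    (v : ℝ) (hv : 0 < v) (hi : IntegrableOn (fun t => g t / t) (Ioo 0 v)) :
    ENNReal.ofReal (v ^ (-(2 * lam)) * (∫ t in Ioo 0 v, g t / t) ^ 2 / v)
      ≤ ENNReal.ofReal (v ^ (-lam - 1) / lam) *
        ∫⁻ t in Ioo (0:ℝ) v, ENNReal.ofReal (t ^ (-lam - 1) * g t ^ 2) := by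
  set u := ∫ t in Ioo 0 v, g t / t with hu
  set M := ∫ t in Ioo 0 v, |g t| / t with hMdef
  have hae : (fun t => ‖g t / t‖) =ᵐ[volume.restrict (Ioo 0 v)] fun t => |g t| / t := by
    filter_upwards [ae_restrict_mem measurableSet_Ioo] with t ht
    rw [Real.norm_eq_abs, abs_div, abs_of_pos ht.1]
  have habs : IntegrableOn (fun t => |g t| / t) (Ioo 0 v) := hi.norm.congr hae
  have hM : |u| ≤ M := by
    calc |u| = ‖u‖ := (Real.norm_eq_abs u).symm
      _ ≤ ∫ t in Ioo 0 v, ‖g t / t‖ := norm_integral_le_integral_norm _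
      _ = M := integral_congr_ae hae
  have hM0 : (0:ℝ) ≤ M := (abs_nonneg u).trans hM
  have hu2 : u ^ 2 ≤ M ^ 2 := by nlinarith [abs_nonneg u, sq_abs u]
  -- A and B
  set A : ℝ → ENNReal := fun t => ENNReal.ofReal (t ^ ((lam - 1)/2)) with hA
  set B : ℝ → ENNReal := fun t => ENNReal.ofReal (t ^ ((-lam - 1)/2) * |g t|) with hB
  have hAmeas : Measurable A := by measurability
  have hBmeas : Measurable B := by
    apply Measurable.ennreal_ofReal
    exact Measurable.mul (by measurability) hmeas.abs
  have hMofReal : ENNReal.ofReal M = ∫⁻ t in Ioo (0:ℝ) v, (A * B) t := by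
    rw [ofReal_integral_eq_lintegral_ofReal habs ?_]
    · apply lintegral_congr_ae
      filter_upwards [ae_restrict_mem measurableSet_Ioo] with t ht
      have ht0 : (0:ℝ) < t := ht.1
      rw [Pi.mul_apply, hA, hB]
      rw [← ENNReal.ofReal_mul (Real.rpow_nonneg ht0.le _)]
      congr 1
      rw [← mul_assoc, ← Real.rpow_add ht0]
      rw [show (lam - 1)/2 + (-lam - 1)/2 = -1 by ring, Real.rpow_neg_one]
      rw [div_eq_inv_mul]
    · filter_upwards [ae_restrict_mem measurableSet_Ioo] with t ht
      have ht0 : (0:ℝ) < t := ht.1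
      positivity
  have conj : Real.HolderConjugate 2 2 := Real.HolderConjugate.two_two
  have holder := ENNReal.lintegral_mul_le_Lp_mul_Lq (volume.restrict (Ioo (0:ℝ) v)) conj
    hAmeas.aemeasurable hBmeas.aemeasurable
  have hAsq : ∫⁻ t in Ioo (0:ℝ) v, A t ^ (2:ℝ) = ENNReal.ofReal (v ^ lam / lam) := by
    rw [← lint_rpow_Ioo lam v hlam hv]
    apply lintegral_congr_ae
    filter_upwards [ae_restrict_mem measurableSet_Ioo] with t ht
    rw [hA, ENNReal.ofReal_rpow_of_nonneg (Real.rpow_nonneg ht.1.le _) (by norm_num)]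
    congr 1
    rw [← Real.rpow_mul ht.1.le]
    norm_num
  have hBsq : ∫⁻ t in Ioo (0:ℝ) v, B t ^ (2:ℝ)
      = ∫⁻ t in Ioo (0:ℝ) v, ENNReal.ofReal (t ^ (-lam - 1) * g t ^ 2) := by
    apply lintegral_congr_ae
    filter_upwards [ae_restrict_mem measurableSet_Ioo] with t ht
    have ht0 : (0:ℝ) < t := ht.1
    rw [hB, ENNReal.ofReal_rpow_of_nonneg (by positivity) (by norm_num)]
    rw [Real.mul_rpow (Real.rpow_nonneg ht0.le _) (abs_nonneg _), ← Real.rpow_mul ht0.le]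
    rw [show (-lam - 1)/2 * 2 = -lam - 1 by ring]
    congr 1
    rw [show (2:ℝ) = ((2:ℕ):ℝ) by norm_num, Real.rpow_natCast, sq_abs]
  set J := ∫⁻ t in Ioo (0:ℝ) v, ENNReal.ofReal (t ^ (-lam - 1) * g t ^ 2) with hJ
  have hMJ : (ENNReal.ofReal M) ^ 2 ≤ ENNReal.ofReal (v ^ lam / lam) * J := by
    rw [hMofReal]
    calc (∫⁻ t in Ioo (0:ℝ) v, (A * B) t) ^ 2
        ≤ ((∫⁻ t in Ioo (0:ℝ) v, A t ^ (2:ℝ)) ^ (1/(2:ℝ)) *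
           (∫⁻ t in Ioo (0:ℝ) v, B t ^ (2:ℝ)) ^ (1/(2:ℝ))) ^ 2 := by
          exact pow_le_pow_left' holder 2
      _ = (∫⁻ t in Ioo (0:ℝ) v, A t ^ (2:ℝ)) * (∫⁻ t in Ioo (0:ℝ) v, B t ^ (2:ℝ)) := by
          rw [mul_pow]
          congr 1 <;>
          · rw [← ENNReal.rpow_natCast _ 2, ← ENNReal.rpow_mul]
            norm_num
      _ = ENNReal.ofReal (v ^ lam / lam) * J := by rw [hAsq, hBsq]
  calc ENNReal.ofReal (v ^ (-(2 * lam)) * u ^ 2 / v)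
      = ENNReal.ofReal (v ^ (-(2*lam) - 1) * u ^ 2) := by
        congr 1
        rw [Real.rpow_sub hv, Real.rpow_one]; ring
    _ ≤ ENNReal.ofReal (v ^ (-(2*lam) - 1) * M ^ 2) := by
        apply ENNReal.ofReal_le_ofReal
        exact mul_le_mul_of_nonneg_left hu2 (Real.rpow_nonneg hv.le _)
    _ = ENNReal.ofReal (v ^ (-(2*lam) - 1)) * (ENNReal.ofReal M) ^ 2 := by
        rw [ENNReal.ofReal_mul (Real.rpow_nonneg hv.le _), ← ENNReal.ofReal_pow hM0]
    _ ≤ ENNReal.ofReal (v ^ (-(2*lam) - 1)) * (ENNReal.ofReal (v ^ lam / lam) * J) := by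
        exact mul_le_mul_right hMJ _
    _ = ENNReal.ofReal (v ^ (-(2*lam) - 1) * (v ^ lam / lam)) * J := by
        rw [ENNReal.ofReal_mul (Real.rpow_nonneg hv.le _), mul_assoc]
    _ = ENNReal.ofReal (v ^ (-lam - 1) / lam) * J := by
        congr 2
        rw [mul_div_assoc', ← Real.rpow_add hv]
        ring_nf

lemma hardy_fubini (lam δ : ℝ) (hlam : 0 < lam) (hδ : 0 < δ) (g : ℝ → ℝ)
    (hmeas : Measurable g) :
    (∫⁻ v in Ioo (0:ℝ) δ, ENNReal.ofReal (v ^ (-lam - 1) / lam) *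
        ∫⁻ t in Ioo (0:ℝ) v, ENNReal.ofReal (t ^ (-lam - 1) * g t ^ 2))
      ≤ ENNReal.ofReal (1 / lam ^ 2) *
        ∫⁻ t in Ioo (0:ℝ) δ, ENNReal.ofReal (t ^ (-(2 * lam)) * g t ^ 2 / t) := by
  set Φ : ℝ → ENNReal := fun t => ENNReal.ofReal (t ^ (-lam - 1) * g t ^ 2) with hΦ
  set ψ : ℝ → ENNReal := fun v => ENNReal.ofReal (v ^ (-lam - 1) / lam) with hψ
  have hΦm : Measurable Φ := by
    apply Measurable.ennreal_ofReal
    exact Measurable.mul (by measurability) (hmeas.pow_const 2)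
  have hψm : Measurable ψ := by measurability
  have hFm : Measurable fun t : ℝ => ENNReal.ofReal (t ^ (-(2 * lam)) * g t ^ 2 / t) := by
    apply Measurable.ennreal_ofReal
    exact (Measurable.mul (by measurability) (hmeas.pow_const 2)).div measurable_id
  set K : ℝ → ℝ → ENNReal := fun v t => ψ v * (Iio v).indicator Φ t with hK
  have step1 : ∀ v ∈ Ioo (0:ℝ) δ,
      ψ v * (∫⁻ t in Ioo (0:ℝ) v, Φ t) = ∫⁻ t in Ioo (0:ℝ) δ, K v t := by
    intro v hv
    rw [hK]
    rw [lintegral_const_mul _ (hΦm.indicator measurableSet_Iio)]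
    congr 1
    have hset1 : Iio v ∩ Ioo (0:ℝ) δ = Ioo 0 v := by
      ext x
      simp only [mem_inter_iff, mem_Iio, mem_Ioo]
      constructor
      · rintro ⟨h1, h2, _⟩; exact ⟨h2, h1⟩
      · rintro ⟨h1, h2⟩; exact ⟨h2, h1, h2.trans hv.2⟩
    rw [lintegral_indicator measurableSet_Iio, Measure.restrict_restrict measurableSet_Iio,
      hset1]
  have hKmeas : Measurable fun p : ℝ × ℝ => K p.1 p.2 := by
    have heq : (fun p : ℝ × ℝ => K p.1 p.2)
        = fun p : ℝ × ℝ => ψ p.1 * ({q : ℝ × ℝ | q.2 < q.1}.indicator (fun q => Φ q.2) p) := by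
      funext p
      show ψ p.1 * (Iio p.1).indicator Φ p.2 = _
      congr 1
    rw [heq]
    exact (hψm.comp measurable_fst).mul
      ((hΦm.comp measurable_snd).indicator (measurableSet_lt measurable_snd measurable_fst))
  have step3 : ∀ t ∈ Ioo (0:ℝ) δ,
      (∫⁻ v in Ioo (0:ℝ) δ, K v t) = Φ t * ∫⁻ v in Ioo t δ, ψ v := by
    intro t ht
    have hpt : ∀ v, K v t = Φ t * (Ioi t).indicator ψ v := by
      intro v
      show ψ v * (Iio v).indicator Φ t = Φ t * (Ioi t).indicator ψ v
      by_cases h : t < v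
      · rw [Set.indicator_of_mem (mem_Iio.2 h) Φ, Set.indicator_of_mem (mem_Ioi.2 h) ψ,
          mul_comm]
      · rw [Set.indicator_of_notMem (fun hc => h (mem_Iio.1 hc)) Φ,
          Set.indicator_of_notMem (fun hc => h (mem_Ioi.1 hc)) ψ]
        simp
    simp only [hpt]
    rw [lintegral_const_mul _ (hψm.indicator measurableSet_Ioi)]
    congr 1
    have hset2 : Ioi t ∩ Ioo (0:ℝ) δ = Ioo t δ := by
      ext x
      simp only [mem_inter_iff, mem_Ioi, mem_Ioo]
      constructor
      · rintro ⟨h1, _, h3⟩; exact ⟨h1, h3⟩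
      · rintro ⟨h1, h3⟩; exact ⟨h1, ht.1.trans h1, h3⟩
    rw [lintegral_indicator measurableSet_Ioi, Measure.restrict_restrict measurableSet_Ioi,
      hset2]
  calc (∫⁻ v in Ioo (0:ℝ) δ, ψ v * ∫⁻ t in Ioo (0:ℝ) v, Φ t)
      = ∫⁻ v in Ioo (0:ℝ) δ, ∫⁻ t in Ioo (0:ℝ) δ, K v t := by
        apply lintegral_congr_ae
        filter_upwards [ae_restrict_mem measurableSet_Ioo] with v hv
        exact step1 v hv
    _ = ∫⁻ t in Ioo (0:ℝ) δ, ∫⁻ v in Ioo (0:ℝ) δ, K v t :=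
        lintegral_lintegral_swap hKmeas.aemeasurable
    _ = ∫⁻ t in Ioo (0:ℝ) δ, Φ t * ∫⁻ v in Ioo t δ, ψ v := by
        apply lintegral_congr_ae
        filter_upwards [ae_restrict_mem measurableSet_Ioo] with t ht
        exact step3 t ht
    _ ≤ ∫⁻ t in Ioo (0:ℝ) δ, Φ t * ENNReal.ofReal (t ^ (-lam) / lam ^ 2) := by
        apply lintegral_mono_ae
        filter_upwards [ae_restrict_mem measurableSet_Ioo] with t ht
        exact mul_le_mul_right (lint_rpow_Ioo_ub lam t δ hlam ht.1 ht.2) _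
    _ = ∫⁻ t in Ioo (0:ℝ) δ,
          ENNReal.ofReal (1 / lam ^ 2) * ENNReal.ofReal (t ^ (-(2 * lam)) * g t ^ 2 / t) := by
        apply lintegral_congr_ae
        filter_upwards [ae_restrict_mem measurableSet_Ioo] with t ht
        have ht0 : (0:ℝ) < t := ht.1
        rw [hΦ]
        rw [← ENNReal.ofReal_mul (by positivity), ← ENNReal.ofReal_mul (by positivity)]
        congr 1
        have h1 : t ^ (-lam - 1) * t ^ (-lam) = t ^ (-(2 * lam)) / t := by
          rw [← Real.rpow_add ht0, show -lam - 1 + -lam = -(2 * lam) - 1 by ring,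
            Real.rpow_sub ht0, Real.rpow_one]
        calc t ^ (-lam - 1) * g t ^ 2 * (t ^ (-lam) / lam ^ 2)
            = t ^ (-lam - 1) * t ^ (-lam) * g t ^ 2 / lam ^ 2 := by ring
          _ = t ^ (-(2 * lam)) / t * g t ^ 2 / lam ^ 2 := by rw [h1]
          _ = 1 / lam ^ 2 * (t ^ (-(2 * lam)) * g t ^ 2 / t) := by ring
    _ = ENNReal.ofReal (1 / lam ^ 2) *
          ∫⁻ t in Ioo (0:ℝ) δ, ENNReal.ofReal (t ^ (-(2 * lam)) * g t ^ 2 / t) := by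
        rw [lintegral_const_mul _ hFm]

lemma diff_integral (δ : ℝ) (f : ℝ → ℝ)
    (hi : ∀ v ∈ Ioo (0:ℝ) δ, IntegrableOn f (Ioo 0 v)) :
    ∀ a ∈ Ioo (0:ℝ) δ, ∀ b ∈ Ioo (0:ℝ) δ,
      (∫ t in Ioo 0 b, f t) - (∫ t in Ioo 0 a, f t) = ∫ t in a..b, f t := by
  have key : ∀ a ∈ Ioo (0:ℝ) δ, ∀ b ∈ Ioo (0:ℝ) δ, a ≤ b →
      (∫ t in Ioo 0 b, f t) - (∫ t in Ioo 0 a, f t) = ∫ t in a..b, f t := by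
    intro a ha b hb hab
    have hIb : IntegrableOn f (Ioc 0 b) :=
      (hi b hb).congr_set_ae (Ioo_ae_eq_Ioc (a := (0:ℝ)) (b := b)).symm
    have hI1 : IntegrableOn f (Ioc 0 a) := hIb.mono_set (Ioc_subset_Ioc le_rfl hab)
    have hI2 : IntegrableOn f (Ioc a b) := hIb.mono_set (Ioc_subset_Ioc ha.1.le le_rfl)
    have hsplit : ∫ t in Ioc 0 b, f t = (∫ t in Ioc 0 a, f t) + ∫ t in Ioc a b, f t := by
      rw [← setIntegral_union (Ioc_disjoint_Ioc_of_le le_rfl) measurableSet_Ioc hI1 hI2,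
        Ioc_union_Ioc_eq_Ioc ha.1.le hab]
    calc (∫ t in Ioo 0 b, f t) - (∫ t in Ioo 0 a, f t)
        = (∫ t in Ioc 0 b, f t) - (∫ t in Ioc 0 a, f t) := by
          rw [integral_Ioc_eq_integral_Ioo, integral_Ioc_eq_integral_Ioo]
      _ = ∫ t in Ioc a b, f t := by rw [hsplit]; ring
      _ = ∫ t in a..b, f t := (intervalIntegral.integral_of_le hab).symm
  intro a ha b hb
  rcases le_total a b with hab | hba
  · exact key a ha b hb hab
  · have := key b hb a ha hba
    rw [intervalIntegral.integral_symm]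
    linarith
lemma lint_top (lam δ : ℝ) (hlam : 0 < lam) (hδ : 0 < δ) (c : ℝ) (hc : c ≠ 0) :
    ∫⁻ v in Ioo (0:ℝ) δ, ENNReal.ofReal (v ^ (-(2 * lam)) * c ^ 2 / v) = ⊤ := by
  by_contra h
  have hfin : (∫⁻ v in Ioo (0:ℝ) δ, ENNReal.ofReal (v ^ (-(2 * lam)) * c ^ 2 / v)) < ⊤ :=
    lt_top_iff_ne_top.2 h
  have hmeas2 : Measurable fun v : ℝ => c ^ 2 * v ^ (-(2 * lam) - 1) := by measurability
  have h1 : IntegrableOn (fun v : ℝ => c ^ 2 * v ^ (-(2 * lam) - 1)) (Ioo 0 δ) := by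
    refine ⟨hmeas2.aestronglyMeasurable, ?_⟩
    rw [hasFiniteIntegral_iff_ofReal ?_]
    · have : ∀ᵐ v ∂(volume.restrict (Ioo (0:ℝ) δ)),
          ENNReal.ofReal (c ^ 2 * v ^ (-(2 * lam) - 1))
            = ENNReal.ofReal (v ^ (-(2 * lam)) * c ^ 2 / v) := by
        filter_upwards [ae_restrict_mem measurableSet_Ioo] with v hv
        congr 1
        rw [Real.rpow_sub hv.1, Real.rpow_one]
        ring
      rwa [lintegral_congr_ae this]
    · filter_upwards [ae_restrict_mem measurableSet_Ioo] with v hv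
      have hv0 : (0:ℝ) < v := hv.1
      positivity
  have h2 : IntegrableOn (fun v : ℝ => v ^ (-(2 * lam) - 1)) (Ioo 0 δ) := by
    have h3 := h1.const_mul ((c ^ 2)⁻¹)
    apply h3.congr
    filter_upwards with v
    field_simp
  rw [intervalIntegral.integrableOn_Ioo_rpow_iff hδ] at h2
  linarith


/-- For `λ > 0`, the map `G_{λ,δ}(g·dv/v)(v) = ∫₀^v g(t) dt/t` is a well-defined bounded inverse
(with norm `1/λ` independent of `δ`) of `d = (dv/v) ∧ (v ∂/∂v)` on `v^λ L²_b((0,δ))`: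
the primitive `u(v) = ∫₀^v g(t)/t dt` is well defined, satisfies the weighted `L²` bound,
is locally absolutely continuous with `v·u'(v) = g(v)` a.e., and is the unique such primitive
in the weighted space. -/
theorem weighted_b_primitive_pos_weight
    (lam δ : ℝ) (hlam : 0 < lam) (hδ : 0 < δ) (g : ℝ → ℝ) (hmeas : Measurable g)
    (hg : ∫⁻ t in Ioo 0 δ, ENNReal.ofReal (t ^ (-(2 * lam)) * (g t) ^ 2 / t) < ⊤) :
    -- (i) integrability of `t ↦ g t / t` near `0`, so `u v := ∫ t in Ioo 0 v, g t / t` is defined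
    (∀ v ∈ Ioo (0 : ℝ) δ, IntegrableOn (fun t => g t / t) (Ioo 0 v)) ∧
    -- (ii) the weighted L² bound, with constant `1/λ²` independent of `δ`
    (∫⁻ v in Ioo 0 δ,
        ENNReal.ofReal (v ^ (-(2 * lam)) * (∫ t in Ioo 0 v, g t / t) ^ 2 / v) ≤
      ENNReal.ofReal (1 / lam ^ 2) *
        ∫⁻ t in Ioo 0 δ, ENNReal.ofReal (t ^ (-(2 * lam)) * (g t) ^ 2 / t)) ∧
    -- (iii) local absolute continuity: `u` is an indefinite integral on compact subintervals,
    -- and `v · u'(v) = g v` for a.e. `v ∈ (0,δ)`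
    (∀ a ∈ Ioo (0 : ℝ) δ, ∀ b ∈ Ioo (0 : ℝ) δ,
        (∫ t in Ioo 0 b, g t / t) - (∫ t in Ioo 0 a, g t / t) = ∫ t in a..b, g t / t) ∧
    (∀ᵐ v ∂(volume.restrict (Ioo 0 δ)),
        HasDerivAt (fun x => ∫ t in Ioo 0 x, g t / t) (g v / v) v) ∧
    -- (iv) uniqueness: any locally absolutely continuous `w` with `v·w' = g` a.e. (equivalently,
    -- an indefinite integral of `g t / t` on subintervals) lying in the weighted space equals `u`
    (∀ w : ℝ → ℝ,
        (∀ a ∈ Ioo (0 : ℝ) δ, ∀ b ∈ Ioo (0 : ℝ) δ, w b - w a = ∫ t in a..b, g t / t) →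
        (∫⁻ v in Ioo 0 δ, ENNReal.ofReal (v ^ (-(2 * lam)) * (w v) ^ 2 / v) < ⊤) →
        ∀ v ∈ Ioo (0 : ℝ) δ, w v = ∫ t in Ioo 0 v, g t / t) := by
  have hi : ∀ v ∈ Ioo (0:ℝ) δ, IntegrableOn (fun t => g t / t) (Ioo 0 v) :=
    integrable_div_aux lam δ hlam hδ g hmeas hg
  set u : ℝ → ℝ := fun x => ∫ t in Ioo 0 x, g t / t with hu
  -- part (ii)
  have part2 : ∫⁻ v in Ioo 0 δ,
      ENNReal.ofReal (v ^ (-(2 * lam)) * (∫ t in Ioo 0 v, g t / t) ^ 2 / v) ≤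
      ENNReal.ofReal (1 / lam ^ 2) *
        ∫⁻ t in Ioo 0 δ, ENNReal.ofReal (t ^ (-(2 * lam)) * (g t) ^ 2 / t) := by
    calc ∫⁻ v in Ioo 0 δ,
        ENNReal.ofReal (v ^ (-(2 * lam)) * (∫ t in Ioo 0 v, g t / t) ^ 2 / v)
        ≤ ∫⁻ v in Ioo (0:ℝ) δ, ENNReal.ofReal (v ^ (-lam - 1) / lam) *
            ∫⁻ t in Ioo (0:ℝ) v, ENNReal.ofReal (t ^ (-lam - 1) * g t ^ 2) := by
          apply lintegral_mono_ae
          filter_upwards [ae_restrict_mem measurableSet_Ioo] with v hv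
          exact hardy_pointwise lam hlam g hmeas v hv.1 (hi v hv)
      _ ≤ _ := hardy_fubini lam δ hlam hδ g hmeas
  -- part (iii)
  have part3 : ∀ a ∈ Ioo (0 : ℝ) δ, ∀ b ∈ Ioo (0 : ℝ) δ,
      (∫ t in Ioo 0 b, g t / t) - (∫ t in Ioo 0 a, g t / t) = ∫ t in a..b, g t / t :=
    diff_integral δ (fun t => g t / t) hi
  -- identification of u with the primitive of the indicator function
  have upart : ∀ c' ∈ Ioo (0:ℝ) δ, ∀ x ∈ Ioo (0:ℝ) c',
      u x = ∫ t in (0:ℝ)..x, ((Ioo (0:ℝ) c').indicator fun t => g t / t) t := by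
    intro c' hc' x hx
    have hxsub : Ioo (0:ℝ) x ⊆ Ioo (0:ℝ) c' := Ioo_subset_Ioo le_rfl hx.2.le
    rw [hu, intervalIntegral.integral_of_le hx.1.le, integral_Ioc_eq_integral_Ioo]
    exact setIntegral_congr_fun measurableSet_Ioo
      (fun t ht => (Set.indicator_of_mem (hxsub ht) _).symm)
  have midpt : ∀ c ∈ Ioo (0:ℝ) δ, (c + δ)/2 ∈ Ioo (0:ℝ) δ ∧ c < (c + δ)/2 := by
    intro c hc
    refine ⟨⟨by linarith [hc.1], by linarith [hc.2]⟩, by linarith [hc.2]⟩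
  have hindint : ∀ c' ∈ Ioo (0:ℝ) δ,
      Integrable ((Ioo (0:ℝ) c').indicator fun t => g t / t) := fun c' hc' =>
    (integrable_indicator_iff measurableSet_Ioo).2 (hi c' hc')
  -- part (iv)
  have percut : ∀ c ∈ Ioo (0:ℝ) δ, ∀ᵐ v,
      v ∈ Ioo (0:ℝ) c → HasDerivAt u (g v / v) v := by
    intro c hc
    obtain ⟨hc', hcc'⟩ := midpt c hc
    set c' := (c + δ)/2
    set f' := (Ioo (0:ℝ) c').indicator (fun t => g t / t) with hf'
    filter_upwards [ftc_ae f' (hindint c' hc')] with v hv hvc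
    have hvc' : v ∈ Ioo (0:ℝ) c' := ⟨hvc.1, hvc.2.trans hcc'⟩
    have hueq : u =ᶠ[𝓝 v] fun y => ∫ t in (0:ℝ)..y, f' t := by
      filter_upwards [isOpen_Ioo.mem_nhds hvc'] with x hx
      exact upart c' hc' x hx
    have hfv : f' v = g v / v := Set.indicator_of_mem hvc' _
    rw [hfv] at hv
    exact hv.congr_of_eventuallyEq hueq
  have part4 : ∀ᵐ v ∂(volume.restrict (Ioo 0 δ)), HasDerivAt u (g v / v) v := by
    set cseq : ℕ → ℝ := fun n => δ - δ / (n + 2) with hcseqdef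
    have hcseq : ∀ n : ℕ, cseq n ∈ Ioo (0:ℝ) δ := by
      intro n
      have hn2 : (1:ℝ) < (n:ℝ) + 2 := by
        have : (0:ℝ) ≤ (n:ℝ) := Nat.cast_nonneg n
        linarith
      have h1 : δ / ((n:ℝ) + 2) < δ := div_lt_self hδ hn2
      have h2 : 0 < δ / ((n:ℝ) + 2) := by positivity
      exact ⟨by simp only [hcseqdef]; linarith, by simp only [hcseqdef]; linarith⟩
    have hall : ∀ᵐ v, ∀ n : ℕ, v ∈ Ioo (0:ℝ) (cseq n) → HasDerivAt u (g v / v) v :=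
      ae_all_iff.2 fun n => percut (cseq n) (hcseq n)
    rw [ae_restrict_iff' measurableSet_Ioo]
    filter_upwards [hall] with v hv hvδ
    have hdv : 0 < δ - v := by linarith [hvδ.2]
    obtain ⟨n, hn⟩ := exists_nat_gt (δ / (δ - v))
    have h2 : δ < ((n:ℝ) + 2) * (δ - v) := by
      have h3 : δ < (n:ℝ) * (δ - v) := (div_lt_iff₀ hdv).1 hn
      nlinarith
    have h4 : δ / ((n:ℝ) + 2) < δ - v := by
      rw [div_lt_iff₀ (by positivity : (0:ℝ) < (n:ℝ) + 2)]
      linarith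
    exact hv n ⟨hvδ.1, by simp only [hcseqdef]; linarith⟩
  -- continuity of u on (0, δ)
  have hucont : ∀ x ∈ Ioo (0:ℝ) δ, ContinuousAt u x := by
    intro x hx
    obtain ⟨hc', hcc'⟩ := midpt x hx
    set c' := (x + δ)/2
    set f' := (Ioo (0:ℝ) c').indicator (fun t => g t / t) with hf'
    have hFc : Continuous fun y => ∫ t in (0:ℝ)..y, f' t :=
      (hindint c' hc').continuous_primitive 0
    have hxc' : x ∈ Ioo (0:ℝ) c' := ⟨hx.1, hcc'⟩
    have hueq : u =ᶠ[𝓝 x] fun y => ∫ t in (0:ℝ)..y, f' t := by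
      filter_upwards [isOpen_Ioo.mem_nhds hxc'] with y hy
      exact upart c' hc' y hy
    exact hFc.continuousAt.congr hueq.symm
  have hu_con : ContinuousOn u (Ioo (0:ℝ) δ) := fun x hx => (hucont x hx).continuousWithinAt
  have hu_aem : AEMeasurable u (volume.restrict (Ioo (0:ℝ) δ)) :=
    hu_con.aemeasurable measurableSet_Ioo
  refine ⟨hi, part2, part3, part4, ?_⟩
  -- part (v)
  intro w hw hwfin v hv
  have hconst : ∀ x ∈ Ioo (0:ℝ) δ, w x = u x + (w v - u v) := by
    intro x hx
    have h1 := hw v hv x hx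
    have h2 := part3 v hv x hx
    have : w x - w v = u x - u v := by rw [h1, ← h2]
    linarith
  by_contra hne
  set c := w v - u v with hc
  have hc0 : c ≠ 0 := sub_ne_zero.2 hne
  -- the weighted L² seminorm of the constant c is infinite
  have htop : ∫⁻ x in Ioo (0:ℝ) δ, ENNReal.ofReal (x ^ (-(2 * lam)) * c ^ 2 / x) = ⊤ :=
    lint_top lam δ hlam hδ c hc0
  -- but it is bounded by the (finite) seminorms of w and u
  set U : ℝ → ENNReal := fun x => ENNReal.ofReal (x ^ (-(2 * lam)) * u x ^ 2 / x) with hU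
  set W : ℝ → ENNReal := fun x => ENNReal.ofReal (x ^ (-(2 * lam)) * (u x + c) ^ 2 / x) with hW
  have hUfin : ∫⁻ x in Ioo (0:ℝ) δ, U x < ⊤ :=
    lt_of_le_of_lt part2 (ENNReal.mul_lt_top ENNReal.ofReal_lt_top hg)
  have hWfin : ∫⁻ x in Ioo (0:ℝ) δ, W x < ⊤ := by
    have : ∀ᵐ x ∂(volume.restrict (Ioo (0:ℝ) δ)),
        ENNReal.ofReal (x ^ (-(2 * lam)) * w x ^ 2 / x) = W x := by
      filter_upwards [ae_restrict_mem measurableSet_Ioo] with x hx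
      rw [hW, hconst x hx]
    rwa [lintegral_congr_ae this] at hwfin
  have hWaem : AEMeasurable W (volume.restrict (Ioo (0:ℝ) δ)) := by
    apply AEMeasurable.ennreal_ofReal
    exact (((measurable_id.aemeasurable.pow_const _ |>.mono_measure
        Measure.restrict_le_self : AEMeasurable _ _)).mul
      ((hu_aem.add_const c).pow_const 2)).div measurable_id.aemeasurable
  have hptwise : ∀ᵐ x ∂(volume.restrict (Ioo (0:ℝ) δ)),
      ENNReal.ofReal (x ^ (-(2 * lam)) * c ^ 2 / x) ≤ 2 * W x + 2 * U x := by
    filter_upwards [ae_restrict_mem measurableSet_Ioo] with x hx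
    have hx0 : (0:ℝ) < x := hx.1
    have hr : (0:ℝ) ≤ x ^ (-(2 * lam)) / x := by positivity
    have hsq : c ^ 2 ≤ 2 * (u x + c) ^ 2 + 2 * u x ^ 2 := by nlinarith [sq_nonneg (u x + c + u x)]
    have hreal : x ^ (-(2 * lam)) * c ^ 2 / x
        ≤ 2 * (x ^ (-(2 * lam)) * (u x + c) ^ 2 / x) + 2 * (x ^ (-(2 * lam)) * u x ^ 2 / x) := by
      have := mul_le_mul_of_nonneg_left hsq hr
      calc x ^ (-(2 * lam)) * c ^ 2 / x = (x ^ (-(2 * lam)) / x) * c ^ 2 := by ring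
        _ ≤ (x ^ (-(2 * lam)) / x) * (2 * (u x + c) ^ 2 + 2 * u x ^ 2) := this
        _ = 2 * (x ^ (-(2 * lam)) * (u x + c) ^ 2 / x)
            + 2 * (x ^ (-(2 * lam)) * u x ^ 2 / x) := by ring
    calc ENNReal.ofReal (x ^ (-(2 * lam)) * c ^ 2 / x)
        ≤ ENNReal.ofReal (2 * (x ^ (-(2 * lam)) * (u x + c) ^ 2 / x)
            + 2 * (x ^ (-(2 * lam)) * u x ^ 2 / x)) := ENNReal.ofReal_le_ofReal hreal
      _ = ENNReal.ofReal (2 * (x ^ (-(2 * lam)) * (u x + c) ^ 2 / x))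
            + ENNReal.ofReal (2 * (x ^ (-(2 * lam)) * u x ^ 2 / x)) := by
          rw [ENNReal.ofReal_add (by positivity) (by positivity)]
      _ = 2 * W x + 2 * U x := by
          rw [ENNReal.ofReal_mul (by norm_num : (0:ℝ) ≤ 2),
            ENNReal.ofReal_mul (by norm_num : (0:ℝ) ≤ 2)]
          norm_num [hW, hU]
  have hfinsum : ∫⁻ x in Ioo (0:ℝ) δ, (2 * W x + 2 * U x) < ⊤ := by
    rw [lintegral_add_left' (hWaem.const_mul 2)]
    rw [lintegral_const_mul' 2 W (by norm_num), lintegral_const_mul' 2 U (by norm_num)]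
    exact ENNReal.add_lt_top.2 ⟨ENNReal.mul_lt_top (by norm_num) hWfin,
      ENNReal.mul_lt_top (by norm_num) hUfin⟩
  have : (⊤ : ENNReal) < ⊤ := by
    calc (⊤ : ENNReal) = ∫⁻ x in Ioo (0:ℝ) δ, ENNReal.ofReal (x ^ (-(2 * lam)) * c ^ 2 / x) :=
          htop.symm
      _ ≤ ∫⁻ x in Ioo (0:ℝ) δ, (2 * W x + 2 * U x) := lintegral_mono_ae hptwise
      _ < ⊤ := hfinsum
  exact absurd this (lt_irrefl _)
end

section
/- Let λ < 0 and δ > 0, and let g : (0,δ) → ℝ be measurable with ∫₀^δ t^{-2λ} g(t)² dt/t < ∞. Then: (i) t ↦ g(t)/t is integrable on (v,δ) for every v ∈ (0,δ), so that ũ(v) := −∫_v^δ g(t)/t dt is well defined; (ii) ∫₀^δ v^{-2λ} ũ(v)² dv/v ≤ (1/λ²) · ∫₀^δ t^{-2λ} g(t)² dt/t (in particular the bound is independent of δ); (iii) ũ is locally absolutely continuous on (0,δ) with v·ũ'(v) = g(v) for almost every v. -/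
open MeasureTheory Set Filter
open scoped ENNReal Topology

lemma aux_div {t : ℝ} (ht : 0 < t) (c G : ℝ) : t ^ c * G / t = t ^ (c - 1) * G := by
  rw [Real.rpow_sub ht, Real.rpow_one]; ring

lemma cs_lintegral {α : Type*} {m : MeasurableSpace α} (μ : Measure α) {f h : α → ℝ≥0∞}
    (hf : AEMeasurable f μ) (hh : AEMeasurable h μ) :
    (∫⁻ a, f a * h a ∂μ) ^ (2:ℝ) ≤ (∫⁻ a, f a ^ (2:ℝ) ∂μ) * (∫⁻ a, h a ^ (2:ℝ) ∂μ) := by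
  have hpq : Real.HolderConjugate 2 2 := Real.HolderConjugate.two_two
  have h2 := ENNReal.lintegral_mul_le_Lp_mul_Lq μ hpq hf hh
  calc (∫⁻ a, f a * h a ∂μ) ^ (2:ℝ)
      ≤ ((∫⁻ a, f a ^ (2:ℝ) ∂μ) ^ (1/(2:ℝ)) * (∫⁻ a, h a ^ (2:ℝ) ∂μ) ^ (1/(2:ℝ))) ^ (2:ℝ) := by
        gcongr
        exact h2
    _ = (∫⁻ a, f a ^ (2:ℝ) ∂μ) * (∫⁻ a, h a ^ (2:ℝ) ∂μ) := by
        rw [ENNReal.mul_rpow_of_nonneg _ _ (by norm_num), ← ENNReal.rpow_mul, ← ENNReal.rpow_mul]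
        norm_num

lemma meas_rpow_const (c : ℝ) : Measurable fun t : ℝ => t ^ c := by measurability

lemma rpow_sq {t : ℝ} (ht : 0 ≤ t) (e : ℝ) : (t ^ e) ^ 2 = t ^ (e * 2) := by
  rw [← Real.rpow_natCast (t ^ e) 2, ← Real.rpow_mul ht]; norm_num

lemma hg' (lam δ : ℝ) (hδ : 0 < δ) (g : ℝ → ℝ)
    (hg : ∫⁻ t in Ioo 0 δ, ENNReal.ofReal (t ^ (-(2 * lam)) * (g t) ^ 2 / t) < ⊤) :
    ∫⁻ t in Ioo 0 δ, ENNReal.ofReal (t ^ (-(2 * lam) - 1) * (g t) ^ 2) < ⊤ := by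
  rw [setLIntegral_congr_fun measurableSet_Ioo
    (fun t ht => by rw [← aux_div ht.1 (-(2*lam)) ((g t)^2)])]
  exact hg

lemma pointwise_bound (lam : ℝ) (g : ℝ → ℝ) {v t : ℝ} (hv : 0 < v) (hvt : v ≤ t) (ht : 0 < t)
    (hlam : lam < 0) :
    |g t / t| ≤ t ^ (-(2 * lam) - 1) * (g t) ^ 2 + v ^ (2 * lam - 1) := by
  set a := |g t| * t ^ ((-(2 * lam) - 1) / 2) with ha
  set b := t ^ ((2 * lam - 1) / 2) with hb
  have hsq : ∀ e : ℝ, (t ^ e) ^ 2 = t ^ (e * 2) := fun e => by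
    rw [← Real.rpow_natCast (t ^ e) 2, ← Real.rpow_mul ht.le]; norm_num
  have hab : a * b = |g t / t| := by
    rw [ha, hb, mul_assoc, ← Real.rpow_add ht]
    have : (-(2 * lam) - 1) / 2 + (2 * lam - 1) / 2 = -1 := by ring
    rw [this, Real.rpow_neg_one, abs_div, abs_of_pos ht, div_eq_mul_inv]
  have ha2 : a ^ 2 = t ^ (-(2 * lam) - 1) * (g t) ^ 2 := by
    rw [ha, mul_pow, sq_abs, hsq]; ring_nf
  have hb2 : b ^ 2 ≤ v ^ (2 * lam - 1) := by
    rw [hb, hsq]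
    have : (2 * lam - 1) / 2 * 2 = 2 * lam - 1 := by ring
    rw [this]
    exact Real.rpow_le_rpow_of_nonpos hv hvt (by linarith)
  have h2 : 2 * a * b ≤ a ^ 2 + b ^ 2 := two_mul_le_add_sq a b
  have hb0 : 0 ≤ b := Real.rpow_nonneg ht.le _
  have ha0 : 0 ≤ a := mul_nonneg (abs_nonneg _) (Real.rpow_nonneg ht.le _)
  nlinarith [abs_nonneg (g t / t)]

lemma part_i (lam δ : ℝ) (hlam : lam < 0) (hδ : 0 < δ) (g : ℝ → ℝ) (hmeas : Measurable g)
    (hg : ∫⁻ t in Ioo 0 δ, ENNReal.ofReal (t ^ (-(2 * lam)) * (g t) ^ 2 / t) < ⊤) :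
    ∀ v ∈ Ioo (0 : ℝ) δ, IntegrableOn (fun t => g t / t) (Ioo v δ) := by
  intro v hv
  have hq : Measurable fun t : ℝ => ENNReal.ofReal (t ^ (-(2 * lam) - 1) * (g t) ^ 2) :=
    by measurability
  refine ⟨(hmeas.div measurable_id).aestronglyMeasurable, ?_⟩
  rw [hasFiniteIntegral_iff_norm]
  calc ∫⁻ t in Ioo v δ, ENNReal.ofReal ‖g t / t‖
      ≤ ∫⁻ t in Ioo v δ, (ENNReal.ofReal (t ^ (-(2 * lam) - 1) * (g t) ^ 2)
          + ENNReal.ofReal (v ^ (2 * lam - 1))) := by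
        refine setLIntegral_mono (hq.add measurable_const) (fun t ht => ?_)
        rw [← ENNReal.ofReal_add (mul_nonneg (Real.rpow_nonneg (hv.1.trans ht.1).le _) (sq_nonneg _)) (Real.rpow_nonneg hv.1.le _)]
        exact ENNReal.ofReal_le_ofReal
          (by simpa [Real.norm_eq_abs, abs_div] using
            pointwise_bound lam g hv.1 ht.1.le (hv.1.trans ht.1) hlam)
    _ = (∫⁻ t in Ioo v δ, ENNReal.ofReal (t ^ (-(2 * lam) - 1) * (g t) ^ 2))
          + ENNReal.ofReal (v ^ (2 * lam - 1)) * volume (Ioo v δ) := by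
        rw [lintegral_add_right _ measurable_const, setLIntegral_const]
    _ < ⊤ := by
        refine ENNReal.add_lt_top.2 ⟨?_, ?_⟩
        · exact lt_of_le_of_lt (lintegral_mono_set (Ioo_subset_Ioo hv.1.le le_rfl))
            (hg' lam δ hδ g hg)
        · exact ENNReal.mul_lt_top ENNReal.ofReal_lt_top (by simp [Real.volume_Ioo])


lemma part_iiia (δ : ℝ) (g : ℝ → ℝ)
    (hint : ∀ v ∈ Ioo (0 : ℝ) δ, IntegrableOn (fun t => g t / t) (Ioo v δ)) :
    ∀ a ∈ Ioo (0 : ℝ) δ, ∀ b ∈ Ioo (0 : ℝ) δ,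
      (-∫ t in Ioo b δ, g t / t) - (-∫ t in Ioo a δ, g t / t) = ∫ t in a..b, g t / t := by
  have key : ∀ a ∈ Ioo (0:ℝ) δ, ∀ b ∈ Ioo (0:ℝ) δ, a ≤ b →
      ∫ t in Ioo a δ, g t / t = (∫ t in a..b, g t / t) + ∫ t in Ioo b δ, g t / t := by
    intro a ha b hb hab
    have hset : Ioo a δ = Ioc a b ∪ Ioo b δ := by
      ext x
      simp only [mem_Ioo, mem_Ioc, mem_union]
      constructor
      · rintro ⟨h1, h2⟩
        rcases le_or_gt x b with h | h
        · exact Or.inl ⟨h1, h⟩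
        · exact Or.inr ⟨h, h2⟩
      · rintro (⟨h1, h2⟩ | ⟨h1, h2⟩)
        · exact ⟨h1, lt_of_le_of_lt h2 hb.2⟩
        · exact ⟨lt_of_le_of_lt hab h1, h2⟩
    have disj : Disjoint (Ioc a b) (Ioo b δ) := by
      rw [Set.disjoint_left]
      rintro x hx1 hx2
      exact absurd hx2.1 hx1.2.not_gt
    rw [hset, setIntegral_union disj measurableSet_Ioo
      ((hint a ha).mono_set (fun x hx => ⟨hx.1, lt_of_le_of_lt hx.2 hb.2⟩)) (hint b hb),
      intervalIntegral.integral_of_le hab]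
  intro a ha b hb
  rcases le_total a b with h | h
  · have := key a ha b hb h; linarith
  · have h1 := key b hb a ha h
    have h2 : ∫ t in a..b, g t / t = -∫ t in b..a, g t / t :=
      (intervalIntegral.integral_symm b a)
    rw [h2]; linarith


lemma part_iiib (δ : ℝ) (hδ : 0 < δ) (g : ℝ → ℝ)
    (hint : ∀ v ∈ Ioo (0 : ℝ) δ, IntegrableOn (fun t => g t / t) (Ioo v δ))
    (hadd : ∀ a ∈ Ioo (0 : ℝ) δ, ∀ b ∈ Ioo (0 : ℝ) δ,
      (-∫ t in Ioo b δ, g t / t) - (-∫ t in Ioo a δ, g t / t) = ∫ t in a..b, g t / t) :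
    ∀ᵐ v ∂(volume.restrict (Ioo 0 δ)),
      HasDerivAt (fun x => -∫ t in Ioo x δ, g t / t) (g v / v) v := by
  set f : ℝ → ℝ := fun t => g t / t with hf
  set a : ℕ → ℝ := fun n => δ / (n + 2) with ha
  have ha_mem : ∀ n : ℕ, a n ∈ Ioo (0 : ℝ) δ := by
    intro n
    constructor
    · positivity
    · rw [div_lt_iff₀ (by positivity)]
      nlinarith [hδ]
  set h : ℕ → ℝ → ℝ := fun n => (Ioo (a n) δ).indicator f with hh
  have hglob : ∀ n, Integrable (h n) volume := fun n =>
    ((hint (a n) (ha_mem n)).integrable_indicator measurableSet_Ioo)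
  have hae : ∀ᵐ v ∂(volume : Measure ℝ), ∀ n : ℕ,
      ∀ {ι : Type} {l : Filter ι} (w : ι → ℝ) (δ' : ι → ℝ), Tendsto δ' l (𝓝[>] 0) →
        (∀ᶠ j in l, v ∈ Metric.closedBall (w j) (1 * δ' j)) →
        Tendsto (fun j => ⨍ y in Metric.closedBall (w j) (δ' j), ‖h n y - h n v‖) l (𝓝 0) := by
    rw [ae_all_iff]
    intro n
    filter_upwards [IsUnifLocDoublingMeasure.ae_tendsto_average_norm_sub (μ := volume)
      ((hglob n).locallyIntegrable) 1] with v hv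
    intro ι l w δ' hδ' hmem
    exact hv w δ' hδ' hmem
  rw [ae_restrict_iff' measurableSet_Ioo]
  filter_upwards [hae] with v hv hvmem
  -- choose n with a n < v
  obtain ⟨n, hn⟩ := exists_nat_gt (δ / v)
  have hav : a n < v := by
    rw [ha, div_lt_iff₀ (by positivity)]
    have h1 : δ / v < n + 2 := by linarith
    calc δ = δ / v * v := (div_mul_cancel₀ δ (ne_of_gt hvmem.1)).symm
    _ < (n + 2) * v := mul_lt_mul_of_pos_right h1 hvmem.1
    _ = v * (n + 2) := by ring
  have hv' : v ∈ Ioo (a n) δ := ⟨hav, hvmem.2⟩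
  have hva : h n v = g v / v := indicator_of_mem hv' f
  -- instantiate the average property
  have hδ'lim : Tendsto (fun y : ℝ => |y - v| / 2) (𝓝[≠] v) (𝓝[>] 0) := by
    rw [tendsto_nhdsWithin_iff]
    constructor
    · have : Tendsto (fun y : ℝ => |y - v| / 2) (𝓝 v) (𝓝 (|v - v| / 2)) :=
        (((continuous_id.sub continuous_const).abs.div_const 2).tendsto v)
      simpa using this.mono_left nhdsWithin_le_nhds
    · filter_upwards [eventually_mem_nhdsWithin] with y hy
      have : y - v ≠ 0 := sub_ne_zero.2 hy
      exact div_pos (abs_pos.2 this) two_pos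
  have hmem : ∀ᶠ y in 𝓝[≠] v, v ∈ Metric.closedBall ((v + y) / 2) (1 * (|y - v| / 2)) := by
    apply Eventually.of_forall
    intro y
    rw [Metric.mem_closedBall, Real.dist_eq, one_mul]
    rw [abs_sub_comm y v]
    calc |v - (v + y) / 2| = |(v - y) / 2| := by ring_nf
    _ = |v - y| / 2 := by rw [abs_div]; simp
    _ ≤ |v - y| / 2 := le_rfl
  have havg := hv n (fun y : ℝ => (v + y) / 2) (fun y : ℝ => |y - v| / 2) hδ'lim hmem
  -- now prove HasDerivAt via squeeze
  rw [hasDerivAt_iff_tendsto]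
  rw [← nhdsNE_sup_pure v, Filter.tendsto_sup]
  constructor
  · -- punctured part
    apply squeeze_zero' (Eventually.of_forall fun y =>
      mul_nonneg (inv_nonneg.2 (norm_nonneg _)) (norm_nonneg _)) _ havg
    filter_upwards [(isOpen_Ioo.eventually_mem hv').filter_mono nhdsWithin_le_nhds] with y hy
    have hyδ : y ∈ Ioo (0:ℝ) δ := ⟨lt_trans (ha_mem n).1 hy.1, hy.2⟩
    have hsub : uIcc v y ⊆ Ioo (a n) δ := Set.ordConnected_Ioo.uIcc_subset hv' hy
    have h1 : (fun x => -∫ t in Ioo x δ, f t) y - (fun x => -∫ t in Ioo x δ, f t) v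
        = ∫ t in v..y, f t := hadd v hvmem y hyδ
    have h2 : ∫ t in v..y, f t = ∫ t in v..y, h n t :=
      intervalIntegral.integral_congr (fun t ht => (indicator_of_mem (hsub ht) f).symm)
    have h3 : (fun x => -∫ t in Ioo x δ, f t) y - (fun x => -∫ t in Ioo x δ, f t) v
        - (y - v) • (g v / v) = ∫ t in v..y, (h n t - h n v) := by
      rw [h1, h2, intervalIntegral.integral_sub ((hglob n).intervalIntegrable)
        intervalIntegrable_const, intervalIntegral.integral_const, hva]
    have hball : Metric.closedBall ((v + y) / 2) (|y - v| / 2) = uIcc v y := by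
      rcases le_total v y with hvy | hvy
      · rw [Real.closedBall_eq_Icc, uIcc_of_le hvy, abs_of_nonneg (by linarith : (0:ℝ) ≤ y - v)]
        congr 1 <;> ring
      · rw [Real.closedBall_eq_Icc, uIcc_of_ge hvy, abs_of_nonpos (by linarith : y - v ≤ 0)]
        congr 1 <;> ring
    have hJ : ‖∫ t in v..y, (h n t - h n v)‖
        ≤ ∫ t in Metric.closedBall ((v + y) / 2) (|y - v| / 2), ‖h n t - h n v‖ := by
      refine le_trans (intervalIntegral.norm_integral_le_integral_norm_uIoc) ?_
      apply setIntegral_mono_set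
      · exact ((((hglob n).integrableOn).sub
          (integrableOn_const measure_closedBall_lt_top.ne)).norm)
      · exact Eventually.of_forall (fun t => norm_nonneg _)
      · rw [hball]
        exact HasSubset.Subset.eventuallyLE Set.uIoc_subset_uIcc
    -- compare with average
    rw [h3]
    have hvol : (volume (Metric.closedBall ((v + y) / 2) (|y - v| / 2))).toReal = |y - v| := by
      rw [Real.volume_closedBall, ENNReal.toReal_ofReal (by positivity)]
      ring
    rw [setAverage_eq, measureReal_def, hvol, smul_eq_mul]
    rw [Real.norm_eq_abs (y - v)]
    exact mul_le_mul_of_nonneg_left hJ (inv_nonneg.2 (abs_nonneg _))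
  · -- pure part
    have : (fun y => ‖y - v‖⁻¹ * ‖(fun x => -∫ t in Ioo x δ, f t) y
        - (fun x => -∫ t in Ioo x δ, f t) v - (y - v) • (g v / v)‖) v = 0 := by simp
    rw [show (0:ℝ) = (fun y => ‖y - v‖⁻¹ * ‖(fun x => -∫ t in Ioo x δ, f t) y
        - (fun x => -∫ t in Ioo x δ, f t) v - (y - v) • (g v / v)‖) v from this.symm]
    exact tendsto_pure_nhds _ v


lemma part_ii (lam δ : ℝ) (hlam : lam < 0) (hδ : 0 < δ) (g : ℝ → ℝ) (hmeas : Measurable g)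
    (hint : ∀ v ∈ Ioo (0 : ℝ) δ, IntegrableOn (fun t => g t / t) (Ioo v δ)) :
    ∫⁻ v in Ioo 0 δ,
        ENNReal.ofReal (v ^ (-(2 * lam)) * (-∫ t in Ioo v δ, g t / t) ^ 2 / v) ≤
      ENNReal.ofReal (1 / lam ^ 2) *
        ∫⁻ t in Ioo 0 δ, ENNReal.ofReal (t ^ (-(2 * lam)) * (g t) ^ 2 / t) := by
  have hnl : (0:ℝ) < -lam := by linarith
  set f : ℝ → ℝ := fun t => g t / t with hf
  set q : ℝ → ℝ≥0∞ := fun t => ENNReal.ofReal (t ^ (-lam - 1) * g t ^ 2) with hq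
  have hqmeas : Measurable q :=
    ENNReal.measurable_ofReal.comp ((meas_rpow_const _).mul (hmeas.pow_const 2))
  set A : ℝ → ℝ≥0∞ := fun v => ∫⁻ t in Ioo v δ, q t with hA
  have hAanti : Antitone A := fun v v' hvv' =>
    lintegral_mono_set (Ioo_subset_Ioo hvv' le_rfl)
  have hAmeas : Measurable A := hAanti.measurable
  set I' : ℝ≥0∞ := ∫⁻ t in Ioo 0 δ, ENNReal.ofReal (t ^ (-(2*lam) - 1) * g t ^ 2) with hI'
  have hRHS : ∫⁻ t in Ioo 0 δ, ENNReal.ofReal (t ^ (-(2 * lam)) * (g t) ^ 2 / t) = I' :=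
    setLIntegral_congr_fun measurableSet_Ioo
      (fun t ht => by rw [aux_div ht.1 (-(2*lam)) ((g t)^2)])
  -- the per-point Cauchy-Schwarz bound
  have hkey : ∀ v ∈ Ioo (0:ℝ) δ,
      ENNReal.ofReal (v ^ (-(2 * lam)) * (-∫ t in Ioo v δ, f t) ^ 2 / v) ≤
        ENNReal.ofReal ((-lam)⁻¹) * (ENNReal.ofReal (v ^ (-lam - 1)) * A v) := by
    intro v hv
    have hv0 : 0 < v := hv.1
    set μ' : Measure ℝ := volume.restrict (Ioo v δ) with hμ'
    set F1 : ℝ → ℝ≥0∞ := fun t => ENNReal.ofReal (t ^ ((-lam - 1)/2) * |g t|) with hF1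
    set F2 : ℝ → ℝ≥0∞ := fun t => ENNReal.ofReal (t ^ ((lam - 1)/2)) with hF2
    have hF1m : AEMeasurable F1 μ' :=
      (ENNReal.measurable_ofReal.comp ((meas_rpow_const _).mul hmeas.abs)).aemeasurable
    have hF2m : AEMeasurable F2 μ' :=
      (ENNReal.measurable_ofReal.comp (meas_rpow_const _)).aemeasurable
    set u : ℝ := ∫ t in Ioo v δ, f t with hu
    set X : ℝ := ∫ t in Ioo v δ, |f t| with hX
    have hX0 : 0 ≤ X := setIntegral_nonneg measurableSet_Ioo (fun t _ => abs_nonneg _)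
    have habs : |u| ≤ X := by
      simpa [Real.norm_eq_abs] using norm_integral_le_integral_norm (μ := μ') f
    -- step: ofReal X = ∫⁻ F1 * F2
    have hXeq : ENNReal.ofReal X = ∫⁻ t, F1 t * F2 t ∂μ' := by
      rw [ofReal_integral_eq_lintegral_ofReal (hint v hv).abs
        (ae_of_all _ (fun t => abs_nonneg _))]
      refine setLIntegral_congr_fun measurableSet_Ioo (fun t ht => ?_)
      have ht0 : 0 < t := hv0.trans ht.1
      rw [hF1, hF2, ← ENNReal.ofReal_mul (mul_nonneg (Real.rpow_nonneg ht0.le _) (abs_nonneg _))]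
      congr 1
      rw [mul_assoc, mul_comm (|g t|), ← mul_assoc, ← Real.rpow_add ht0]
      have he : (-lam - 1)/2 + (lam - 1)/2 = -1 := by ring
      rw [he, Real.rpow_neg_one, hf, abs_div, abs_of_pos ht0]
      ring
    -- step: squares of F1 F2
    have hF1sq : ∫⁻ t, F1 t ^ (2:ℝ) ∂μ' = A v := by
      refine setLIntegral_congr_fun measurableSet_Ioo (fun t ht => ?_)
      have ht0 : 0 < t := hv0.trans ht.1
      have hstep : F1 t ^ (2:ℝ) = ENNReal.ofReal ((t ^ ((-lam-1)/2) * |g t|) ^ 2) := by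
        rw [hF1, show (2:ℝ) = ((2:ℕ):ℝ) by norm_num, ENNReal.rpow_natCast,
          ← ENNReal.ofReal_pow (mul_nonneg (Real.rpow_nonneg ht0.le _) (abs_nonneg _))]
      rw [hstep, hq]
      congr 1
      rw [mul_pow, sq_abs, rpow_sq ht0.le]
      congr 2
      ring
    have hF2sq : ∫⁻ t, F2 t ^ (2:ℝ) ∂μ' ≤ ENNReal.ofReal (v ^ lam * (-lam)⁻¹) := by
      have hint2 : IntegrableOn (fun t : ℝ => t ^ (lam - 1)) (Ioo v δ) := by
        have h1 : IntervalIntegrable (fun t : ℝ => t ^ (lam - 1)) volume v δ :=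
          intervalIntegral.intervalIntegrable_rpow (Or.inr (by
            rw [uIcc_of_le hv.2.le]
            intro hmem
            exact absurd hmem.1 (not_le.2 hv0)))
        exact ((intervalIntegrable_iff_integrableOn_Ioc_of_le hv.2.le).1 h1).mono_set
          Ioo_subset_Ioc_self
      have heq : ∫⁻ t, F2 t ^ (2:ℝ) ∂μ' = ∫⁻ t in Ioo v δ, ENNReal.ofReal (t ^ (lam - 1)) := by
        refine setLIntegral_congr_fun measurableSet_Ioo (fun t ht => ?_)
        have ht0 : 0 < t := hv0.trans ht.1
        have hstep : F2 t ^ (2:ℝ) = ENNReal.ofReal ((t ^ ((lam-1)/2)) ^ 2) := by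
          rw [hF2, show (2:ℝ) = ((2:ℕ):ℝ) by norm_num, ENNReal.rpow_natCast,
            ← ENNReal.ofReal_pow (Real.rpow_nonneg ht0.le _)]
        rw [hstep, rpow_sq ht0.le]
        congr 2
        ring
      rw [heq, ← ofReal_integral_eq_lintegral_ofReal hint2
        (ae_restrict_of_forall_mem measurableSet_Ioo
          (fun t ht => Real.rpow_nonneg (hv0.trans ht.1).le _))]
      apply ENNReal.ofReal_le_ofReal
      have hval : ∫ t in Ioo v δ, t ^ (lam - 1) = (δ ^ lam - v ^ lam) / lam := by
        rw [← integral_Ioc_eq_integral_Ioo, ← intervalIntegral.integral_of_le hv.2.le,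
          integral_rpow (Or.inr ⟨by intro h; linarith [hlam], by
            rw [uIcc_of_le hv.2.le]; intro hmem; exact absurd hmem.1 (not_le.2 hv0)⟩)]
        norm_num
      rw [hval]
      have hδl : 0 < δ ^ lam := Real.rpow_pos_of_pos hδ _
      rw [div_le_iff_of_neg hlam]
      have : v ^ lam * (-lam)⁻¹ * lam = -(v ^ lam) := by
        field_simp
        rw [div_self hlam.ne]
      rw [this]
      linarith
    -- assemble Cauchy-Schwarz
    have hCS : ENNReal.ofReal (u ^ 2) ≤ A v * ENNReal.ofReal (v ^ lam * (-lam)⁻¹) := by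
      have h1 : ENNReal.ofReal (u ^ 2) ≤ ENNReal.ofReal (X ^ 2) := by
        apply ENNReal.ofReal_le_ofReal
        calc u ^ 2 = |u| ^ 2 := (sq_abs u).symm
        _ ≤ X ^ 2 := by gcongr
      have h2 : ENNReal.ofReal (X ^ 2) = (∫⁻ t, F1 t * F2 t ∂μ') ^ (2:ℝ) := by
        rw [ENNReal.ofReal_pow hX0, ← hXeq, ← ENNReal.rpow_natCast (ENNReal.ofReal X) 2]
        norm_num
      calc ENNReal.ofReal (u ^ 2) ≤ (∫⁻ t, F1 t * F2 t ∂μ') ^ (2:ℝ) := h2 ▸ h1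
      _ ≤ (∫⁻ t, F1 t ^ (2:ℝ) ∂μ') * (∫⁻ t, F2 t ^ (2:ℝ) ∂μ') := cs_lintegral μ' hF1m hF2m
      _ ≤ A v * ENNReal.ofReal (v ^ lam * (-lam)⁻¹) := by
          rw [hF1sq]; exact mul_le_mul_right hF2sq _
    -- final rearrangement
    have hmulpow : ENNReal.ofReal (v ^ (-(2*lam) - 1)) * ENNReal.ofReal (v ^ lam)
        = ENNReal.ofReal (v ^ (-lam - 1)) := by
      rw [← ENNReal.ofReal_mul (Real.rpow_nonneg hv0.le _), ← Real.rpow_add hv0]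
      congr 2
      ring
    calc ENNReal.ofReal (v ^ (-(2 * lam)) * (-u) ^ 2 / v)
        = ENNReal.ofReal (v ^ (-(2*lam) - 1)) * ENNReal.ofReal (u ^ 2) := by
          rw [aux_div hv0, neg_sq,
            ENNReal.ofReal_mul (Real.rpow_nonneg hv0.le _)]
      _ ≤ ENNReal.ofReal (v ^ (-(2*lam) - 1)) * (A v * ENNReal.ofReal (v ^ lam * (-lam)⁻¹)) :=
          mul_le_mul_right hCS _
      _ = ENNReal.ofReal ((-lam)⁻¹) * (ENNReal.ofReal (v ^ (-lam - 1)) * A v) := by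
          rw [ENNReal.ofReal_mul (Real.rpow_nonneg hv0.le _), ← hmulpow]
          ring
  -- integrate the pointwise bound and apply Tonelli
  set S : Set (ℝ × ℝ) := {p : ℝ × ℝ | p.1 < p.2} with hS
  have hSmeas : MeasurableSet S := measurableSet_lt measurable_fst measurable_snd
  set Φ : ℝ → ℝ → ℝ≥0∞ := fun v t =>
    ENNReal.ofReal (v ^ (-lam - 1)) * S.indicator (fun p => q p.2) (v, t) with hΦ
  have hΦmeas : Measurable (Function.uncurry Φ) :=
    (ENNReal.measurable_ofReal.comp ((meas_rpow_const _).comp measurable_fst)).mul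
      ((hqmeas.comp measurable_snd).indicator hSmeas)
  have hAv : ∀ v ∈ Ioo (0:ℝ) δ, ENNReal.ofReal (v ^ (-lam - 1)) * A v
      = ∫⁻ t in Ioo 0 δ, Φ v t := by
    intro v hv
    have hseteq : Ioi v ∩ Ioo 0 δ = Ioo v δ := by
      ext x
      simp only [mem_inter_iff, mem_Ioi, mem_Ioo]
      constructor
      · rintro ⟨h1, _, h3⟩; exact ⟨h1, h3⟩
      · rintro ⟨h1, h2⟩; exact ⟨h1, hv.1.trans h1, h2⟩
    have h1 : A v = ∫⁻ t in Ioo 0 δ, (Ioi v).indicator q t := by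
      rw [lintegral_indicator measurableSet_Ioi,
        Measure.restrict_restrict measurableSet_Ioi, hseteq]
    rw [h1, ← lintegral_const_mul' _ _ ENNReal.ofReal_ne_top]
    refine lintegral_congr (fun t => ?_)
    rw [hΦ]
    congr 1
  have hinner : ∀ t ∈ Ioo (0:ℝ) δ, (∫⁻ v in Ioo 0 δ, Φ v t)
      = ENNReal.ofReal ((-lam)⁻¹) * ENNReal.ofReal (t ^ (-(2*lam) - 1) * g t ^ 2) := by
    intro t ht
    have ht0 : 0 < t := ht.1
    have h1 : ∀ v : ℝ, Φ v t
        = (Iio t).indicator (fun v => ENNReal.ofReal (v ^ (-lam - 1)) * q t) v := by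
      intro v
      rw [hΦ]
      simp only [Set.indicator_apply, mem_Iio, hS, Set.mem_setOf_eq, mul_ite, mul_zero]
    have hD : (∫⁻ v in Ioo 0 t, ENNReal.ofReal (v ^ (-lam - 1)))
        = ENNReal.ofReal (t ^ (-lam) * (-lam)⁻¹) := by
      have hDint : IntegrableOn (fun v : ℝ => v ^ (-lam - 1)) (Ioo 0 t) := by
        have h2 : IntervalIntegrable (fun v : ℝ => v ^ (-lam - 1)) volume 0 t :=
          intervalIntegral.intervalIntegrable_rpow' (by linarith)
        exact ((intervalIntegrable_iff_integrableOn_Ioc_of_le ht0.le).1 h2).mono_set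
          Ioo_subset_Ioc_self
      rw [← ofReal_integral_eq_lintegral_ofReal hDint
        (ae_restrict_of_forall_mem measurableSet_Ioo
          (fun v hv => Real.rpow_nonneg hv.1.le _))]
      congr 1
      rw [← integral_Ioc_eq_integral_Ioo, ← intervalIntegral.integral_of_le ht0.le,
        integral_rpow (Or.inl (by linarith))]
      have he : -lam - 1 + 1 = -lam := by ring
      rw [he, Real.zero_rpow (by linarith : -lam ≠ 0), sub_zero, div_eq_mul_inv]
    have hseteq2 : Iio t ∩ Ioo 0 δ = Ioo 0 t := by
      ext x
      simp only [mem_inter_iff, mem_Iio, mem_Ioo]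
      constructor
      · rintro ⟨h1, h2, _⟩; exact ⟨h2, h1⟩
      · rintro ⟨h1, h2⟩; exact ⟨h2, h1, h2.trans_le ht.2.le⟩
    calc (∫⁻ v in Ioo 0 δ, Φ v t)
        = ∫⁻ v in Ioo 0 δ,
            (Iio t).indicator (fun v => ENNReal.ofReal (v ^ (-lam - 1)) * q t) v :=
          lintegral_congr (fun v => h1 v)
      _ = ∫⁻ v in Ioo 0 t, ENNReal.ofReal (v ^ (-lam - 1)) * q t := by
          rw [lintegral_indicator measurableSet_Iio,
            Measure.restrict_restrict measurableSet_Iio, hseteq2]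
      _ = (∫⁻ v in Ioo 0 t, ENNReal.ofReal (v ^ (-lam - 1))) * q t :=
          lintegral_mul_const' _ _ ENNReal.ofReal_ne_top
      _ = ENNReal.ofReal ((-lam)⁻¹) * ENNReal.ofReal (t ^ (-(2*lam) - 1) * g t ^ 2) := by
          rw [hD, hq, ← ENNReal.ofReal_mul
            (mul_nonneg (Real.rpow_nonneg ht0.le _) (inv_nonneg.2 hnl.le)),
            ← ENNReal.ofReal_mul (inv_nonneg.2 hnl.le)]
          congr 1
          rw [show -(2*lam) - 1 = (-lam) + (-lam - 1) by ring, Real.rpow_add ht0]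
          ring
  have hfinal : ENNReal.ofReal ((-lam)⁻¹) * ENNReal.ofReal ((-lam)⁻¹)
      = ENNReal.ofReal (1 / lam ^ 2) := by
    rw [← ENNReal.ofReal_mul (inv_nonneg.2 hnl.le)]
    congr 1
    rw [← mul_inv, neg_mul_neg, one_div, sq]
  calc ∫⁻ v in Ioo 0 δ, ENNReal.ofReal (v ^ (-(2 * lam)) * (-∫ t in Ioo v δ, g t / t) ^ 2 / v)
      ≤ ∫⁻ v in Ioo 0 δ, ENNReal.ofReal ((-lam)⁻¹) *
          (ENNReal.ofReal (v ^ (-lam - 1)) * A v) :=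
        setLIntegral_mono (measurable_const.mul
          ((ENNReal.measurable_ofReal.comp (meas_rpow_const _)).mul hAmeas)) hkey
    _ = ENNReal.ofReal ((-lam)⁻¹) * ∫⁻ v in Ioo 0 δ, ENNReal.ofReal (v ^ (-lam - 1)) * A v :=
        lintegral_const_mul' _ _ ENNReal.ofReal_ne_top
    _ = ENNReal.ofReal ((-lam)⁻¹) * ∫⁻ v in Ioo 0 δ, ∫⁻ t in Ioo 0 δ, Φ v t := by
        rw [setLIntegral_congr_fun measurableSet_Ioo hAv]
    _ = ENNReal.ofReal ((-lam)⁻¹) * ∫⁻ t in Ioo 0 δ, ∫⁻ v in Ioo 0 δ, Φ v t := by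
        rw [lintegral_lintegral_swap hΦmeas.aemeasurable]
    _ = ENNReal.ofReal ((-lam)⁻¹) * ∫⁻ t in Ioo 0 δ,
          ENNReal.ofReal ((-lam)⁻¹) * ENNReal.ofReal (t ^ (-(2*lam) - 1) * g t ^ 2) := by
        rw [setLIntegral_congr_fun measurableSet_Ioo hinner]
    _ = ENNReal.ofReal ((-lam)⁻¹) * (ENNReal.ofReal ((-lam)⁻¹) * I') := by
        rw [lintegral_const_mul' _ _ ENNReal.ofReal_ne_top]
    _ = ENNReal.ofReal (1 / lam ^ 2) *
          ∫⁻ t in Ioo 0 δ, ENNReal.ofReal (t ^ (-(2 * lam)) * (g t) ^ 2 / t) := by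
        rw [hRHS, ← mul_assoc, hfinal]


/-- For `λ < 0`, the map `G̃_{λ,δ}` which integrates from the endpoint `δ`,
`ũ(v) = −∫_v^δ g(t) dt/t`, is a well-defined bounded primitive (with norm `1/|λ|` independent
of `δ`) of the weighted `L²` 1-form `g·dv/v` on `v^λ L²_b((0,δ))`:
`t ↦ g t / t` is integrable on `(v,δ)` for each `v ∈ (0,δ)`, `ũ` satisfies the weighted `L²`
bound with constant `1/λ²`, and `ũ` is locally absolutely continuous with `v·ũ'(v) = g(v)` a.e. -/
theorem weighted_b_primitive_neg_weight
    (lam δ : ℝ) (hlam : lam < 0) (hδ : 0 < δ) (g : ℝ → ℝ) (hmeas : Measurable g)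
    (hg : ∫⁻ t in Ioo 0 δ, ENNReal.ofReal (t ^ (-(2 * lam)) * (g t) ^ 2 / t) < ⊤) :
    -- (i) integrability of `t ↦ g t / t` on `(v, δ)`, so `ũ v := -∫ t in Ioo v δ, g t / t`
    -- is well defined
    (∀ v ∈ Ioo (0 : ℝ) δ, IntegrableOn (fun t => g t / t) (Ioo v δ)) ∧
    -- (ii) the weighted L² bound, with constant `1/λ²` independent of `δ`
    (∫⁻ v in Ioo 0 δ,
        ENNReal.ofReal (v ^ (-(2 * lam)) * (-∫ t in Ioo v δ, g t / t) ^ 2 / v) ≤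
      ENNReal.ofReal (1 / lam ^ 2) *
        ∫⁻ t in Ioo 0 δ, ENNReal.ofReal (t ^ (-(2 * lam)) * (g t) ^ 2 / t)) ∧
    -- (iii) local absolute continuity: `ũ` is an indefinite integral on compact subintervals,
    -- and `v · ũ'(v) = g v` for a.e. `v ∈ (0,δ)`
    (∀ a ∈ Ioo (0 : ℝ) δ, ∀ b ∈ Ioo (0 : ℝ) δ,
        (-∫ t in Ioo b δ, g t / t) - (-∫ t in Ioo a δ, g t / t) = ∫ t in a..b, g t / t) ∧
    (∀ᵐ v ∂(volume.restrict (Ioo 0 δ)),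
        HasDerivAt (fun x => -∫ t in Ioo x δ, g t / t) (g v / v) v) := by
  have hi := part_i lam δ hlam hδ g hmeas hg
  have hiiia := part_iiia δ g hi
  exact ⟨hi, part_ii lam δ hlam hδ g hmeas hi, hiiia, part_iiib δ hδ g hi hiiia⟩
end
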